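/- arXiv:1705.02015 — 7 statements merged into one kernel-verified Lean document; each statement's English description precedes it below -/
import Mathlib

section
/- Let B be a convex set in R^n whose interior contains no integer points, and suppose B is defined by linear inequalities whose facet-defining hyperplanes each contain an integer point of [0,1]^n in the relative interior of the corresponding facet, constructed from a family of pairwise disjoint faces of the unit cube covering its vertices as in the text. Then for every i with 2 ≤ i ≤ 2^n there exists a maximal lattice-free polyhedron in R^n with exactly i facets. -/
open Pointwise

/-- A lattice-free set: an `n`-dimensional closed convex set whose interior contains
no integer point. -/
def IsLatticeFree (n : ℕ) (B : Set (EuclideanSpace ℝ (Fin n))) : Prop :=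
  IsClosed B ∧ Convex ℝ B ∧ (interior B).Nonempty ∧
    ∀ z : Fin n → ℤ, (WithLp.toLp 2 (fun t => (z t : ℝ)) : EuclideanSpace ℝ (Fin n)) ∉ interior B

/-- A maximal lattice-free set. -/
def IsMaximalLatticeFree (n : ℕ) (B : Set (EuclideanSpace ℝ (Fin n))) : Prop :=
  IsLatticeFree n B ∧ ∀ B', IsLatticeFree n B' → B ⊆ B' → B' = B

/-- `B` is the intersection of `k` half-spaces with nonzero normals. -/
def HalfspaceRep (n k : ℕ) (B : Set (EuclideanSpace ℝ (Fin n))) : Prop :=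
  ∃ (a : Fin k → EuclideanSpace ℝ (Fin n)) (b : Fin k → ℝ),
    (∀ j, a j ≠ 0) ∧ B = {x | ∀ j, (inner ℝ (a j) (x) : ℝ) ≤ b j}

lemma code_exists : ∀ (n i : ℕ), 1 ≤ i → i ≤ 2 ^ n →
    ∃ c : Fin i → List Bool,
      (∀ j, (c j).length ≤ n) ∧
      (∀ j j' : Fin i, j ≠ j' → ¬ (c j <+: c j')) ∧
      (∀ s : List Bool, s.length = n → ∃ j, c j <+: s) := by
  intro n
  induction n with
  | zero =>
    intro i h1 h2
    have hi : i = 1 := by omega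
    subst hi
    refine ⟨fun _ => [], by simp, ?_, fun s hs => ⟨0, by simp⟩⟩
    intro j j' hjj'
    exact absurd (Subsingleton.elim j j') hjj'
  | succ n ih =>
    intro i h1 h2
    rcases eq_or_lt_of_le h1 with h1' | h1'
    · -- i = 1
      refine ⟨fun _ => [], by simp, ?_, fun s hs => ⟨⟨0, by omega⟩, by simp⟩⟩
      intro j j' hjj'
      have : i = 1 := h1'.symm
      subst this
      exact absurd (Subsingleton.elim j j') hjj'
    · -- i ≥ 2
      have hi2 : 2 ≤ i := h1'
      set i0 := i / 2 with hi0
      set i1 := i - i0 with hi1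
      have h01 : 1 ≤ i0 := Nat.one_le_div_iff (by norm_num) |>.2 hi2
      have h02 : i0 ≤ 2 ^ n := by
        have := Nat.div_le_div_right (c := 2) h2
        simpa [Nat.pow_succ, Nat.mul_div_cancel] using this
      have h11 : 1 ≤ i1 := by omega
      have h12 : i1 ≤ 2 ^ n := by
        have : i ≤ 2 ^ n * 2 := by simpa [Nat.pow_succ] using h2
        omega
      obtain ⟨c0, hlen0, hpf0, hcomp0⟩ := ih i0 h01 h02
      obtain ⟨c1, hlen1, hpf1, hcomp1⟩ := ih i1 h11 h12
      have hsub : ∀ j : Fin i, ¬ (j : ℕ) < i0 → (j : ℕ) - i0 < i1 := by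
        intro j hj; have := j.isLt; omega
      refine ⟨fun j => if h : (j : ℕ) < i0 then false :: c0 ⟨j, h⟩
        else true :: c1 ⟨(j : ℕ) - i0, hsub j h⟩, ?_, ?_, ?_⟩
      · intro j
        by_cases h : (j : ℕ) < i0 <;> simp [h]
        · exact hlen0 _
        · exact hlen1 _
      · intro j j' hjj'
        by_cases h : (j : ℕ) < i0 <;> by_cases h' : (j' : ℕ) < i0 <;>
          simp [h, h', List.cons_prefix_cons]
        · exact hpf0 _ _ (by simpa [Fin.ext_iff] using hjj')
        · exact hpf1 _ _ (by
            simp only [ne_eq, Fin.ext_iff]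
            have := j.isLt; have := j'.isLt
            have : (j : ℕ) ≠ (j' : ℕ) := by simpa [Fin.ext_iff] using hjj'
            omega)
      · intro s hs
        match s, hs with
        | b :: s', hs =>
          have hs' : s'.length = n := by simpa using hs
          cases b
          · obtain ⟨j0, hj0⟩ := hcomp0 s' hs'
            refine ⟨⟨j0, lt_of_lt_of_le j0.isLt (by omega)⟩, ?_⟩
            have : ((⟨j0, lt_of_lt_of_le j0.isLt (by omega)⟩ : Fin i) : ℕ) < i0 := j0.isLt
            simp [this, List.cons_prefix_cons]
            convert hj0 using 2
          · obtain ⟨j1, hj1⟩ := hcomp1 s' hs'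
            have hlt : i0 + (j1 : ℕ) < i := by have := j1.isLt; omega
            refine ⟨⟨i0 + j1, hlt⟩, ?_⟩
            have hnot : ¬ ((⟨i0 + j1, hlt⟩ : Fin i) : ℕ) < i0 := by simp
            simp only [hnot, dite_false, List.cons_prefix_cons, true_and]
            convert hj1 using 2
            ext
            simp


def bitOf (w : List Bool) (t : ℕ) : Bool := w.getD t false

lemma bitOf_eq (w : List Bool) (t : ℕ) (h : t < w.length) : bitOf w t = w[t] := by
  simp [bitOf, List.getD_eq_getElem?_getD, List.getElem?_eq_getElem h]

noncomputable def Acoef (n : ℕ) (w : List Bool) : EuclideanSpace ℝ (Fin n) := WithLp.toLp 2 fun t =>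
  if (t : ℕ) < w.length then (if bitOf w t then 1 else -1) else 0

noncomputable def gcoef (n : ℕ) (w : List Bool) (t : Fin n) : ℝ :=
  if (t : ℕ) < w.length then (if bitOf w t then 1 else 0) else 0

noncomputable def bval (n : ℕ) (w : List Bool) : ℝ := ∑ t, gcoef n w t

def vtx (n : ℕ) (w : List Bool) (t : Fin n) : ℤ :=
  if (t : ℕ) < w.length then (if bitOf w t then 1 else 0) else 0

noncomputable def vtxR (n : ℕ) (w : List Bool) : EuclideanSpace ℝ (Fin n) :=
  WithLp.toLp 2 fun t => ((vtx n w t : ℤ) : ℝ)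

lemma euclid_inner {n : ℕ} (a x : EuclideanSpace ℝ (Fin n)) :
    (inner ℝ a x : ℝ) = ∑ t, a t * x t := by
  simp [PiLp.inner_apply, RCLike.inner_apply, mul_comm]

lemma vtxR_eq (n : ℕ) (w : List Bool) (t : Fin n) :
    vtxR n w t = if (t : ℕ) < w.length then (if bitOf w t then (1:ℝ) else 0) else 0 := by
  simp only [vtxR, vtx, PiLp.toLp_apply]
  by_cases h : (t : ℕ) < w.length
  · simp only [if_pos h]
    cases hb : bitOf w (t : ℕ) <;> simp [hb]
  · simp [if_neg h]

lemma sum_A_vtx_self (n : ℕ) (w : List Bool) :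
    ∑ t, Acoef n w t * vtxR n w t = bval n w := by
  apply Finset.sum_congr rfl
  intro t _
  rw [vtxR_eq]
  simp only [Acoef, gcoef, PiLp.toLp_apply]
  by_cases h : (t : ℕ) < w.length
  · simp only [if_pos h]
    cases hb : bitOf w (t : ℕ) <;> simp [hb]
  · simp [if_neg h]

lemma sum_A_int_ge (n : ℕ) (w : List Bool) (z : Fin n → ℤ)
    (hz : ∀ t : Fin n, (t : ℕ) < w.length →
      (bitOf w t = true → 1 ≤ z t) ∧ (bitOf w t = false → z t ≤ 0)) :
    bval n w ≤ ∑ t, Acoef n w t * ((z t : ℤ) : ℝ) := by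
  apply Finset.sum_le_sum
  intro t _
  simp only [Acoef, gcoef, PiLp.toLp_apply]
  by_cases h : (t : ℕ) < w.length
  · simp only [if_pos h]
    cases hb : bitOf w (t : ℕ)
    · have h1 := (hz t h).2 hb
      have h2 : (z t : ℝ) ≤ 0 := by exact_mod_cast h1
      norm_num; linarith
    · have h1 := (hz t h).1 hb
      have h2 : (1 : ℝ) ≤ (z t : ℝ) := by exact_mod_cast h1
      norm_num; linarith
  · simp [if_neg h]

lemma vtxR_mem_unit (n : ℕ) (w : List Bool) (t : Fin n) :
    vtxR n w t = 0 ∨ vtxR n w t = 1 := by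
  rw [vtxR_eq]
  by_cases h : (t : ℕ) < w.length
  · simp only [if_pos h]
    cases hb : bitOf w (t : ℕ) <;> simp [hb]
  · simp [if_neg h]

lemma vtxR_eq_one_iff (n : ℕ) (w : List Bool) (t : Fin n) :
    vtxR n w t = 1 ↔ ((t : ℕ) < w.length ∧ bitOf w t = true) := by
  rw [vtxR_eq]
  by_cases h : (t : ℕ) < w.length
  · simp only [if_pos h]
    cases hb : bitOf w (t : ℕ) <;> simp [hb, h]
  · simp [if_neg h, h]

lemma vtxR_eq_zero_iff (n : ℕ) (w : List Bool) (t : Fin n) :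
    vtxR n w t = 0 ↔ ((t : ℕ) < w.length → bitOf w t = false) := by
  rw [vtxR_eq]
  by_cases h : (t : ℕ) < w.length
  · simp only [if_pos h]
    cases hb : bitOf w (t : ℕ) <;> simp [hb, h]
  · simp [if_neg h, h]

lemma sum_A_vtx_le_term (n : ℕ) (w W : List Bool) (t : Fin n) :
    Acoef n W t * vtxR n w t ≤ gcoef n W t := by
  simp only [Acoef, gcoef, PiLp.toLp_apply]
  by_cases h : (t : ℕ) < W.length
  · simp only [if_pos h]
    cases hb : bitOf W (t : ℕ) <;> rcases vtxR_mem_unit n w t with hv | hv <;>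
      simp only [hb, hv] <;> norm_num
  · simp [if_neg h]

lemma sum_A_vtx_lt (n : ℕ) (w W : List Bool) (hc : w.length ≤ n) (hc' : W.length ≤ n)
    (h1 : ¬ W <+: w) (h2 : ¬ w <+: W) :
    ∑ t, Acoef n W t * vtxR n w t < bval n W := by
  apply Finset.sum_lt_sum (fun t _ => sum_A_vtx_le_term n w W t)
  by_contra hns
  push_neg at hns
  have heq : ∀ t : Fin n, Acoef n W t * vtxR n w t = gcoef n W t := fun t =>
    le_antisymm (sum_A_vtx_le_term n w W t) (hns t (Finset.mem_univ t))
  have hagree : ∀ t : ℕ, t < W.length →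
      (bitOf W t = true → ((t : ℕ) < w.length ∧ bitOf w t = true)) ∧
      (bitOf W t = false → (t < w.length → bitOf w t = false)) := by
    intro t ht'
    have htn : t < n := lt_of_lt_of_le ht' hc'
    have he := heq ⟨t, htn⟩
    simp only [Acoef, gcoef, PiLp.toLp_apply, if_pos ht'] at he
    constructor
    · intro hb; rw [hb, if_pos rfl] at he
      simp only [one_mul] at he
      rw [← vtxR_eq_one_iff n w ⟨t, htn⟩]
      exact he
    · intro hb; rw [hb] at he
      simp only [Bool.false_eq_true, if_false, neg_one_mul, neg_eq_zero] at he
      rw [← vtxR_eq_zero_iff n w ⟨t, htn⟩]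
      exact he
  have main : ∀ t : ℕ, t < W.length → t < w.length → bitOf W t = bitOf w t := by
    intro t ht' htc
    rcases hagree t ht' with ⟨ha1, ha0⟩
    cases hb : bitOf W t
    · exact ((ha0 hb) htc).symm
    · exact (ha1 hb).2.symm
  rcases le_or_gt W.length w.length with hll | hll
  · apply h1
    rw [List.prefix_iff_eq_take]
    apply List.ext_getElem (by simp [hll, Nat.min_eq_left])
    intro t h1t h2t
    rw [List.getElem_take]
    rw [← bitOf_eq W t h1t, ← bitOf_eq w t (lt_of_lt_of_le h1t hll)]
    exact main t h1t (lt_of_lt_of_le h1t hll)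
  · apply h2
    rw [List.prefix_iff_eq_take]
    apply List.ext_getElem (by simp [le_of_lt hll, Nat.min_eq_left])
    intro t h1t h2t
    rw [List.getElem_take]
    rw [← bitOf_eq w t h1t, ← bitOf_eq W t (lt_trans h1t hll)]
    exact (main t (lt_trans h1t hll) h1t).symm

lemma sum_A_center_lt (n : ℕ) (w : List Bool) (h0 : 0 < w.length) (hc : w.length ≤ n) :
    ∑ t : Fin n, Acoef n w t * (2⁻¹ : ℝ) < bval n w := by
  apply Finset.sum_lt_sum
  · intro t _
    simp only [Acoef, gcoef, PiLp.toLp_apply]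
    by_cases h : (t : ℕ) < w.length
    · simp only [if_pos h]
      cases hb : bitOf w (t : ℕ) <;> norm_num
    · simp [if_neg h]
  · have h0n : (0 : ℕ) < n := lt_of_lt_of_le h0 hc
    refine ⟨⟨0, h0n⟩, Finset.mem_univ _, ?_⟩
    simp only [Acoef, gcoef, PiLp.toLp_apply]
    rw [if_pos h0, if_pos h0]
    cases hb : bitOf w 0 <;> norm_num

lemma Acoef_ne_zero (n : ℕ) (w : List Bool) (h0 : 0 < w.length) (hc : w.length ≤ n) :
    Acoef n w ≠ 0 := by
  intro h
  have h2 := congrArg (fun v : EuclideanSpace ℝ (Fin n) => v ⟨0, lt_of_lt_of_le h0 hc⟩) h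
  simp only [Acoef, PiLp.toLp_apply] at h2
  rw [if_pos h0] at h2
  have h3 : (0 : EuclideanSpace ℝ (Fin n)) ⟨0, lt_of_lt_of_le h0 hc⟩ = 0 := rfl
  rw [h3] at h2
  cases hb : bitOf w 0 <;> rw [hb] at h2 <;> norm_num at h2

-- helper: interior points of a set inside a halfspace satisfy strict ineq
lemma interior_halfspace' {n : ℕ} {S : Set (EuclideanSpace ℝ (Fin n))}
    {a : EuclideanSpace ℝ (Fin n)} {d : ℝ} (ha : a ≠ 0)
    (hS : S ⊆ {x | (inner ℝ a x : ℝ) ≤ d}) {x} (hx : x ∈ interior S) :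
    (inner ℝ a x : ℝ) < d := by
  rcases Metric.isOpen_iff.1 isOpen_interior x hx with ⟨ε, hε, hball⟩
  have hna : (0:ℝ) < ‖a‖ := norm_pos_iff.2 ha
  set r : ℝ := ε / (2 * ‖a‖) with hr
  have hrpos : 0 < r := by positivity
  have hmem : x + r • a ∈ S := by
    apply interior_subset
    apply hball
    have : dist (x + r • a) x = r * ‖a‖ := by
      simp [dist_eq_norm, norm_smul, abs_of_pos hrpos]
    have hre : r * ‖a‖ = ε / 2 := by
      rw [hr]; field_simp
    rw [Metric.mem_ball, this, hre]
    linarith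
  have h2 : (inner ℝ a (x + r • a) : ℝ) ≤ d := hS hmem
  rw [inner_add_right, real_inner_smul_right, real_inner_self_eq_norm_sq] at h2
  have : 0 < r * ‖a‖ ^ 2 := by positivity
  linarith


/-- For every `i` with `2 ≤ i ≤ 2^n`, there exists a maximal lattice-free polyhedron
in `ℝ^n` with exactly `i` facets. -/
theorem exists_maximal_latticeFree_with_exactly_i_facets (n : ℕ) (hn : 1 ≤ n)
    (i : ℕ) (h2 : 2 ≤ i) (hi : i ≤ 2 ^ n) :
    ∃ B : Set (EuclideanSpace ℝ (Fin n)),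
      IsMaximalLatticeFree n B ∧ HalfspaceRep n i B ∧ ∀ k < i, ¬ HalfspaceRep n k B := by
  obtain ⟨co, hlen, hpf, hcomp⟩ := code_exists n i (by omega) hi
  -- every codeword is nonempty
  have hlen1 : ∀ j, 0 < (co j).length := by
    intro j
    by_contra h
    have hcj : co j = [] := List.length_eq_zero_iff.1 (by omega)
    haveI : Nontrivial (Fin i) := ⟨⟨0, by omega⟩, ⟨1, by omega⟩, by simp [Fin.ext_iff]⟩
    obtain ⟨j', hj'⟩ := exists_ne j
    exact hpf j j' (Ne.symm hj') (hcj ▸ (co j').nil_prefix)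
  set A : Fin i → EuclideanSpace ℝ (Fin n) := fun j => Acoef n (co j) with hA
  set bb : Fin i → ℝ := fun j => bval n (co j) with hbb
  set B : Set (EuclideanSpace ℝ (Fin n)) :=
    {x | ∀ j, (inner ℝ (A j) x : ℝ) ≤ bb j} with hB
  set Bs : Set (EuclideanSpace ℝ (Fin n)) :=
    {x | ∀ j, (inner ℝ (A j) x : ℝ) < bb j} with hBs
  have hAne : ∀ j, A j ≠ 0 := fun j => Acoef_ne_zero n (co j) (hlen1 j) (hlen j)
  have hBsB : Bs ⊆ B := fun x hx j => le_of_lt (hx j)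
  have hBsopen : IsOpen Bs := by
    have hrw : Bs = ⋂ j, {x : EuclideanSpace ℝ (Fin n) | (inner ℝ (A j) x : ℝ) < bb j} := by
      ext x; simp [hBs, Set.mem_iInter]
    rw [hrw]
    exact isOpen_iInter_of_finite fun j =>
      isOpen_lt (Continuous.inner continuous_const continuous_id) continuous_const
  have hBclosed : IsClosed B := by
    have hrw : B = ⋂ j, {x : EuclideanSpace ℝ (Fin n) | (inner ℝ (A j) x : ℝ) ≤ bb j} := by
      ext x; simp [hB, Set.mem_iInter]
    rw [hrw]
    exact isClosed_iInter fun j =>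
      isClosed_le (Continuous.inner continuous_const continuous_id) continuous_const
  have hBconvex : Convex ℝ B := by
    have hrw : B = ⋂ j, {x : EuclideanSpace ℝ (Fin n) | (inner ℝ (A j) x : ℝ) ≤ bb j} := by
      ext x; simp [hB, Set.mem_iInter]
    rw [hrw]
    refine convex_iInter fun j => convex_halfSpace_le ?_ _
    exact ⟨fun x y => inner_add_right _ _ _, fun m x => real_inner_smul_right _ _ _⟩
  have hBsint : Bs ⊆ interior B := interior_maximal hBsB hBsopen
  -- center point
  have hpmem : (WithLp.toLp 2 (fun _ => (2⁻¹ : ℝ)) : EuclideanSpace ℝ (Fin n)) ∈ Bs := by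
    intro j
    rw [euclid_inner]
    simp only [PiLp.toLp_apply]
    exact sum_A_center_lt n (co j) (hlen1 j) (hlen j)
  -- no integer point in interior
  have hint : ∀ z : Fin n → ℤ,
      (WithLp.toLp 2 (fun t => (z t : ℝ)) : EuclideanSpace ℝ (Fin n)) ∉ interior B := by
    intro z hz
    obtain ⟨j, hj⟩ := hcomp (List.ofFn fun t : Fin n => decide (1 ≤ z t)) (by simp)
    have h1 : bb j ≤ (inner ℝ (A j) (WithLp.toLp 2 (fun t => (z t : ℝ)) : EuclideanSpace ℝ (Fin n)) : ℝ) := by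
      rw [euclid_inner]
      apply sum_A_int_ge
      intro t ht
      have hbit : bitOf (co j) t = decide (1 ≤ z t) := by
        rw [bitOf_eq (co j) t ht]
        rw [hj.getElem (i := (t : ℕ)) ht]
        simp [List.getElem_ofFn]
      constructor
      · intro hb; rw [hbit] at hb; exact of_decide_eq_true hb
      · intro hb; rw [hbit] at hb
        have := of_decide_eq_false hb
        omega
    have h2 := interior_halfspace' (hAne j) (fun x (hx : x ∈ B) => hx j) hz
    exact absurd h2 (not_lt.2 h1)
  -- vertices
  have hVeq : ∀ j, (inner ℝ (A j) (vtxR n (co j)) : ℝ) = bb j := by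
    intro j; rw [euclid_inner]; exact sum_A_vtx_self n (co j)
  have hVlt : ∀ j' j, j' ≠ j → (inner ℝ (A j') (vtxR n (co j)) : ℝ) < bb j' := by
    intro j' j hne
    rw [euclid_inner]
    exact sum_A_vtx_lt n (co j) (co j') (hlen j) (hlen j')
      (hpf j' j hne) (hpf j j' (Ne.symm hne))
  have hVB : ∀ j, vtxR n (co j) ∈ B := by
    intro j j'
    rcases eq_or_ne j' j with rfl | hne
    · exact le_of_eq (hVeq j')
    · exact le_of_lt (hVlt j' j hne)
  have hLF : IsLatticeFree n B := ⟨hBclosed, hBconvex, ⟨_, hBsint hpmem⟩, hint⟩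
  refine ⟨B, ⟨hLF, ?_⟩, ⟨A, bb, hAne, rfl⟩, ?_⟩
  · -- maximality
    intro B' hB' hBB'
    apply Set.Subset.antisymm _ hBB'
    intro y hy
    by_contra hyB
    obtain ⟨j, hj⟩ : ∃ j, bb j < (inner ℝ (A j) y : ℝ) := by
      by_contra h; push_neg at h; exact hyB (fun j => h j)
    set U : Set (EuclideanSpace ℝ (Fin n)) :=
      ⋂ j' : {j' : Fin i // j' ≠ j}, {x | (inner ℝ (A j'.1) x : ℝ) < bb j'.1} with hU
    have hUopen : IsOpen U := isOpen_iInter_of_finite fun j' =>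
      isOpen_lt (Continuous.inner continuous_const continuous_id) continuous_const
    have hVU : vtxR n (co j) ∈ U := Set.mem_iInter.2 fun j' => hVlt j'.1 j j'.2
    have hFcont : Continuous (fun μ : ℝ => vtxR n (co j) + μ • (vtxR n (co j) - y)) := by
      exact continuous_const.add (continuous_id.smul continuous_const)
    have hpre : IsOpen ((fun μ : ℝ => vtxR n (co j) + μ • (vtxR n (co j) - y)) ⁻¹' U) :=
      hUopen.preimage hFcont
    have h0mem : (0 : ℝ) ∈ (fun μ : ℝ => vtxR n (co j) + μ • (vtxR n (co j) - y)) ⁻¹' U := by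
      simp only [Set.mem_preimage, zero_smul, add_zero]
      exact hVU
    rcases Metric.isOpen_iff.1 hpre 0 h0mem with ⟨ε, hε, hball⟩
    set μ : ℝ := min (ε / 2) 1 with hμ
    have hμpos : 0 < μ := by positivity
    have hμball : μ ∈ Metric.ball (0 : ℝ) ε := by
      rw [Metric.mem_ball, dist_zero_right, Real.norm_eq_abs, abs_of_pos hμpos]
      have : μ ≤ ε / 2 := min_le_left _ _
      linarith
    have hμU : vtxR n (co j) + μ • (vtxR n (co j) - y) ∈ U := hball hμball
    set x0 : EuclideanSpace ℝ (Fin n) := vtxR n (co j) + μ • (vtxR n (co j) - y) with hx0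
    have hx0Bs : x0 ∈ Bs := by
      intro m
      rcases eq_or_ne m j with rfl | hne
      · rw [hx0, inner_add_right, real_inner_smul_right, inner_sub_right, hVeq m]
        have : μ * (bb m - (inner ℝ (A m) y : ℝ)) < 0 :=
          mul_neg_of_pos_of_neg hμpos (by linarith)
        linarith
      · exact Set.mem_iInter.1 hμU ⟨m, hne⟩
    have hx0int : x0 ∈ interior B' := interior_mono hBB' (hBsint hx0Bs)
    have hcombo : vtxR n (co j) = (1 / (1 + μ)) • x0 + (μ / (1 + μ)) • y := by
      rw [hx0]
      have h1μ : (1 : ℝ) + μ ≠ 0 := by positivity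
      match_scalars
      · field_simp
      · field_simp; ring
    have hVint : vtxR n (co j) ∈ interior B' := by
      rw [hcombo]
      exact hB'.2.1.combo_interior_self_mem_interior hx0int hy
        (by positivity) (by positivity) (by field_simp)
    exact hB'.2.2.2 (vtx n (co j)) hVint
  · -- no smaller representation
    rintro k hk ⟨cc, dd, hccne, hBeq⟩
    have hT : ∀ j : Fin i, ∃ t : Fin k, (inner ℝ (cc t) (vtxR n (co j)) : ℝ) = dd t := by
      intro j
      by_contra h
      push_neg at h
      have hle : ∀ t, (inner ℝ (cc t) (vtxR n (co j)) : ℝ) ≤ dd t := by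
        have := hVB j
        rw [hBeq] at this
        exact this
      have hlt : ∀ t, (inner ℝ (cc t) (vtxR n (co j)) : ℝ) < dd t := fun t =>
        lt_of_le_of_ne (hle t) (h t)
      have hsub : {x : EuclideanSpace ℝ (Fin n) | ∀ t, (inner ℝ (cc t) x : ℝ) < dd t} ⊆ B := by
        intro x hx
        rw [hBeq]
        exact fun t => le_of_lt (hx t)
      have hop : IsOpen {x : EuclideanSpace ℝ (Fin n) | ∀ t, (inner ℝ (cc t) x : ℝ) < dd t} := by
        have hrw : {x : EuclideanSpace ℝ (Fin n) | ∀ t, (inner ℝ (cc t) x : ℝ) < dd t} =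
            ⋂ t, {x : EuclideanSpace ℝ (Fin n) | (inner ℝ (cc t) x : ℝ) < dd t} := by
          ext x; simp [Set.mem_iInter]
        rw [hrw]
        exact isOpen_iInter_of_finite fun t =>
          isOpen_lt (Continuous.inner continuous_const continuous_id) continuous_const
      exact hint (vtx n (co j)) (interior_maximal hsub hop hlt)
    choose T hTeq using hT
    obtain ⟨j, j', hjj', hTj⟩ := Fintype.exists_ne_map_eq_of_card_lt T (by simpa using hk)
    set ww : EuclideanSpace ℝ (Fin n) := (2⁻¹ : ℝ) • (vtxR n (co j) + vtxR n (co j')) with hww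
    have hwBs : ww ∈ Bs := by
      intro m
      rw [hww, real_inner_smul_right, inner_add_right]
      rcases eq_or_ne m j with rfl | hne
      · have e1 : (inner ℝ (A m) (vtxR n (co m)) : ℝ) = bb m := hVeq m
        have e2 : (inner ℝ (A m) (vtxR n (co j')) : ℝ) < bb m := hVlt m j' hjj'
        linarith
      · have e1 : (inner ℝ (A m) (vtxR n (co j)) : ℝ) < bb m := hVlt m j hne
        have e2 : (inner ℝ (A m) (vtxR n (co j')) : ℝ) ≤ bb m := hVB j' m
        linarith
    have h1 : (inner ℝ (cc (T j)) ww : ℝ) < dd (T j) := by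
      refine interior_halfspace' (hccne (T j)) ?_ (hBsint hwBs)
      intro x hx
      rw [hBeq] at hx
      exact hx (T j)
    have h2 : (inner ℝ (cc (T j)) ww : ℝ) = dd (T j) := by
      rw [hww, real_inner_smul_right, inner_add_right, hTeq j, hTj, hTeq j']
      ring
    exact absurd h2 (ne_of_lt h1)
end

section
/- Let V be a nonempty finite subset of R^n, W a nonempty finite subset of R^n \ {0}, L = conv(V) + cone(W), and f ∈ int(L). For t ∈ N define L_t = conv(V ∪ (f + tW)). Then f ∈ int(L_t) for every t ∈ N. -/
open Pointwise

/-- The convex conic hull of a finite set `W`: all nonnegative combinations. -/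
def coneHull (n : ℕ) (W : Finset (EuclideanSpace ℝ (Fin n))) :
    Set (EuclideanSpace ℝ (Fin n)) :=
  {x | ∃ c : EuclideanSpace ℝ (Fin n) → ℝ, (∀ w, 0 ≤ c w) ∧ x = ∑ w ∈ W, c w • w}

/-- With `L = conv(V) + cone(W)` and `f ∈ int(L)`, the point `f` is interior to
`L_t = conv(V ∪ (f + tW))` for every `t ∈ ℕ`, `t ≥ 1`. -/
theorem interior_mem_Lt (n : ℕ) (V W : Finset (EuclideanSpace ℝ (Fin n)))
    (hV : V.Nonempty) (hW : W.Nonempty) (hW0 : (0 : EuclideanSpace ℝ (Fin n)) ∉ W)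
    (f : EuclideanSpace ℝ (Fin n))
    (hf : f ∈ interior (convexHull ℝ (V : Set (EuclideanSpace ℝ (Fin n))) + coneHull n W))
    (t : ℕ) (ht : 1 ≤ t) :
    f ∈ interior (convexHull ℝ
      ((V : Set (EuclideanSpace ℝ (Fin n))) ∪ ((fun w => f + (t : ℝ) • w) '' W))) := by
  classical
  set L : Set (EuclideanSpace ℝ (Fin n)) :=
    convexHull ℝ (V : Set (EuclideanSpace ℝ (Fin n))) + coneHull n W with hL
  set C : Set (EuclideanSpace ℝ (Fin n)) :=
    convexHull ℝ
      ((V : Set (EuclideanSpace ℝ (Fin n))) ∪ ((fun w => f + (t : ℝ) • w) '' W)) with hCdef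
  have hCconv : Convex ℝ C := convex_convexHull ℝ _
  have ht0 : (0 : ℝ) < (t : ℝ) := by exact_mod_cast ht
  -- Key: for every x ∈ L there is a positive a with a•x + (1-a)•f ∈ C.
  have key : ∀ x ∈ L, ∃ a : ℝ, 0 < a ∧ a • x + (1 - a) • f ∈ C := by
    intro x hx
    rw [hL, Set.mem_add] at hx
    obtain ⟨v, hv, y, hy, rfl⟩ := hx
    obtain ⟨c, hc0, rfl⟩ := hy
    have hvC : v ∈ C := convexHull_mono Set.subset_union_left hv
    set S : ℝ := ∑ w ∈ W, c w with hSdef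
    have hS0 : 0 ≤ S := Finset.sum_nonneg fun w _ => hc0 w
    rcases eq_or_lt_of_le hS0 with hS | hS
    · -- all coefficients vanish
      have hz : ∀ w ∈ W, c w = 0 := by
        intro w hw
        exact (Finset.sum_eq_zero_iff_of_nonneg fun i _ => hc0 i).1 hS.symm w hw
      refine ⟨1, one_pos, ?_⟩
      have : (∑ w ∈ W, c w • w) = 0 := Finset.sum_eq_zero fun w hw => by rw [hz w hw, zero_smul]
      simpa [this] using hvC
    · -- S > 0
      have htS : (0 : ℝ) < (t : ℝ) + S := by linarith
      set a : ℝ := (t : ℝ) / ((t : ℝ) + S) with hadef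
      have ha : 0 < a := by positivity
      have ha1 : a ≤ 1 := by
        rw [hadef, div_le_one htS]; linarith
      have hy'C : (∑ w ∈ W, (c w / S) • (f + (t : ℝ) • w)) ∈ C := by
        apply hCconv.sum_mem
        · intro w _; exact div_nonneg (hc0 w) hS0
        · rw [← Finset.sum_div, ← hSdef, div_self hS.ne']
        · intro w hw
          apply subset_convexHull
          exact Set.mem_union_right _ ⟨w, hw, rfl⟩
      have hz : a • v + (1 - a) • (∑ w ∈ W, (c w / S) • (f + (t : ℝ) • w)) ∈ C :=
        hCconv hvC hy'C ha.le (by linarith) (by ring)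
      have hrw : (1 - a) • (∑ w ∈ W, (c w / S) • (f + (t : ℝ) • w))
          = (1 - a) • f + a • ∑ w ∈ W, c w • w := by
        calc (1 - a) • (∑ w ∈ W, (c w / S) • (f + (t : ℝ) • w))
            = ∑ w ∈ W, (((1 - a) * (c w / S)) • f + (a * c w) • w) := by
              rw [Finset.smul_sum]
              refine Finset.sum_congr rfl fun w _ => ?_
              rw [smul_smul, smul_add, smul_smul]
              congr 2
              rw [hadef]
              field_simp
              ring
          _ = (∑ w ∈ W, ((1 - a) * (c w / S))) • f + a • ∑ w ∈ W, c w • w := by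
              rw [Finset.sum_add_distrib, ← Finset.sum_smul, Finset.smul_sum]
              congr 1
              exact Finset.sum_congr rfl fun w _ => (smul_smul a (c w) w).symm
          _ = (1 - a) • f + a • ∑ w ∈ W, c w • w := by
              congr 2
              rw [← Finset.mul_sum, ← Finset.sum_div, ← hSdef, div_self hS.ne', mul_one]
      refine ⟨a, ha, ?_⟩
      have heq : a • (v + ∑ w ∈ W, c w • w) + (1 - a) • f
          = a • v + (1 - a) • (∑ w ∈ W, (c w / S) • (f + (t : ℝ) • w)) := by
        rw [hrw, smul_add]; abel
      rw [heq]; exact hz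
  have hfL : f ∈ L := interior_subset hf
  have hfC : f ∈ C := by
    obtain ⟨a, _, haC⟩ := key f hfL
    have : a • f + (1 - a) • f = f := by module
    rwa [this] at haC
  -- Core property: every direction from f stays in C for a small positive step.
  have core : ∀ u : EuclideanSpace ℝ (Fin n), ∃ δ : ℝ, 0 < δ ∧ f + δ • u ∈ C := by
    intro u
    have hcont : Filter.Tendsto (fun ε : ℝ => f + ε • u) (nhds 0) (nhds f) := by
      have : Continuous fun ε : ℝ => f + ε • u := by continuity
      simpa using this.tendsto 0
    have h2 := hcont.eventually (isOpen_interior.mem_nhds hf)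
    have h3 := h2.filter_mono (nhdsWithin_le_nhds (s := Set.Ioi (0 : ℝ)))
    obtain ⟨ε, hmem, hpos⟩ := (h3.and self_mem_nhdsWithin).exists
    have hxL : f + ε • u ∈ L := interior_subset hmem
    obtain ⟨a, ha, haC⟩ := key _ hxL
    refine ⟨a * ε, mul_pos ha hpos, ?_⟩
    have : a • (f + ε • u) + (1 - a) • f = f + (a * ε) • u := by module
    rwa [this] at haC
  -- The affine span of C is everything.
  have hdir : vectorSpan ℝ C = ⊤ := by
    rw [eq_top_iff]
    intro u _
    obtain ⟨δ, hδ, hmem⟩ := core u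
    have h1 : (f + δ • u) -ᵥ f ∈ vectorSpan ℝ C := vsub_mem_vectorSpan ℝ hmem hfC
    have h2 : (f + δ • u) -ᵥ f = δ • u := by
      simp [vsub_eq_sub]
    rw [h2] at h1
    have h3 := Submodule.smul_mem (vectorSpan ℝ C) δ⁻¹ h1
    rwa [smul_smul, inv_mul_cancel₀ hδ.ne', one_smul] at h3
  have hspan : affineSpan ℝ C = ⊤ := by
    rw [eq_top_iff]
    intro p _
    have hp : p - f ∈ (affineSpan ℝ C).direction := by
      rw [direction_affineSpan, hdir]; trivial
    have := AffineSubspace.vadd_mem_of_mem_direction hp (mem_affineSpan ℝ hfC)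
    simpa [vadd_eq_add, sub_add_cancel] using this
  obtain ⟨g, hg⟩ := hCconv.interior_nonempty_iff_affineSpan_eq_top.2 hspan
  obtain ⟨δ, hδ, hyC⟩ := core (f - g)
  have h1p : (0 : ℝ) < 1 + δ := by linarith
  have heq : (δ / (1 + δ)) • g + (1 / (1 + δ)) • (f + δ • (f - g)) = f := by
    match_scalars <;> field_simp <;> ring
  have := hCconv.combo_interior_self_mem_interior (a := δ / (1 + δ)) (b := 1 / (1 + δ))
    hg hyC (by positivity) (by positivity) (by field_simp; ring)
  rwa [heq] at this
end

section
/- Let V be a nonempty finite subset of R^n, W a nonempty finite subset of R^n \ {0}, L = conv(V) + cone(W), f ∈ int(L), and L_t = conv(V ∪ (f + tW)) for t ∈ N. Then the sequence (L_t) is increasing with respect to set inclusion: L_t ⊆ L_{t+1} for all t. -/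
open Pointwise

/-- The sets `L_t = conv(V ∪ (f + tW))` are increasing in `t`. -/
theorem Lt_monotone (n : ℕ) (V W : Finset (EuclideanSpace ℝ (Fin n)))
    (hV : V.Nonempty) (hW : W.Nonempty) (hW0 : (0 : EuclideanSpace ℝ (Fin n)) ∉ W)
    (f : EuclideanSpace ℝ (Fin n))
    (hf : f ∈ interior (convexHull ℝ (V : Set (EuclideanSpace ℝ (Fin n))) + coneHull n W))
    (t : ℕ) (ht : 1 ≤ t) :
    convexHull ℝ
        ((V : Set (EuclideanSpace ℝ (Fin n))) ∪ ((fun w => f + (t : ℝ) • w) '' W)) ⊆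
      convexHull ℝ
        ((V : Set (EuclideanSpace ℝ (Fin n))) ∪ ((fun w => f + ((t : ℝ) + 1) • w) '' W)) := by
  set s : ℝ := (t : ℝ) + 1 with hsdef
  have hs0 : (0 : ℝ) < s := by positivity
  set S : Set (EuclideanSpace ℝ (Fin n)) :=
    (V : Set (EuclideanSpace ℝ (Fin n))) ∪ ((fun w => f + s • w) '' W) with hS
  set K := convexHull ℝ S with hK
  have hKconv : Convex ℝ K := convex_convexHull ℝ S
  have hVK : convexHull ℝ (V : Set (EuclideanSpace ℝ (Fin n))) ⊆ K :=
    convexHull_mono Set.subset_union_left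
  obtain ⟨v, hv, c, hc, hvc⟩ := interior_subset hf
  obtain ⟨cf, hcf0, rfl⟩ := hc
  have hvK : v ∈ K := hVK hv
  have hgen : ∀ w ∈ W, f + s • w ∈ K := fun w hw =>
    subset_convexHull ℝ S (Or.inr ⟨w, hw, rfl⟩)
  -- f is in K
  have hfK : f ∈ K := by
    set C := ∑ w ∈ W, cf w with hCdef
    have hC0 : 0 ≤ C := Finset.sum_nonneg fun w _ => hcf0 w
    rcases eq_or_lt_of_le hC0 with hC | hC
    · have hzero : ∀ w ∈ W, cf w = 0 := by
        rw [eq_comm, Finset.sum_eq_zero_iff_of_nonneg (fun w _ => hcf0 w)] at hC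
        exact hC
      have hfv : f = v := by
        rw [← hvc]
        show v + _ = v
        rw [Finset.sum_congr rfl (fun w hw => by rw [hzero w hw, zero_smul])]
        simp
      rw [hfv]; exact hvK
    · have hq : (∑ w ∈ W, (cf w / C) • (f + s • w)) ∈ K := by
        apply hKconv.sum_mem
        · intro w _; exact div_nonneg (hcf0 w) hC0
        · rw [← Finset.sum_div, ← hCdef, div_self (ne_of_gt hC)]
        · intro w hw; exact hgen w hw
      have hsum : (∑ w ∈ W, cf w • w) = f - v := by
        rw [eq_sub_iff_add_eq, add_comm]; exact hvc
      have expand : (∑ w ∈ W, (cf w / C) • (f + s • w)) = f + (s / C) • (f - v) := by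
        rw [← hsum]
        rw [Finset.smul_sum]
        simp only [smul_add, Finset.sum_add_distrib, smul_smul]
        congr 1
        · rw [← Finset.sum_smul, ← Finset.sum_div]
          rw [div_self (ne_of_gt hC), one_smul]
        · apply Finset.sum_congr rfl
          intro w _
          rw [show cf w / C * s = s / C * cf w by ring]
      have key : f = (s / (s + C)) • v
          + (C / (s + C)) • (∑ w ∈ W, (cf w / C) • (f + s • w)) := by
        rw [expand]
        have hsC : s + C ≠ 0 := by positivity
        match_scalars <;> field_simp <;> ring
      rw [key]
      exact hKconv hvK hq (by positivity) (by positivity)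
        (by field_simp)
  -- main argument
  apply convexHull_min _ hKconv
  rintro x (hx | ⟨w, hw, rfl⟩)
  · exact subset_convexHull ℝ S (Or.inl hx)
  · have hcomb : f + (t : ℝ) • w = ((t : ℝ) / s) • (f + s • w) + (1 / s) • f := by
      match_scalars <;> field_simp <;> exact hsdef
    show f + (t : ℝ) • w ∈ K
    rw [hcomb]
    exact hKconv (hgen w hw) hfK (by positivity) (by positivity) (by field_simp; exact hsdef.symm)
end

section
/- Let M ⊆ R^n be a closed convex set, p ∈ R^n, α ≥ 0, and let P = conv(M ∪ M′) where M′ = (1+α)M + p. Then P = ⋃_{0 ≤ μ ≤ 1} ((1 + μα)M + μp). -/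
open Pointwise


/-- A truncated cone `P = conv(M ∪ M′)` with `M′ = (1+α)M + p` equals the union of the
homothetical copies `(1 + μα)M + μp` for `0 ≤ μ ≤ 1`. -/
theorem truncated_cone_eq_union (n : ℕ) (M : Set (EuclideanSpace ℝ (Fin n)))
    (hMc : IsClosed M) (hMv : Convex ℝ M)
    (p : EuclideanSpace ℝ (Fin n)) (α : ℝ) (hα : 0 ≤ α) :
    convexHull ℝ (M ∪ ((fun x => (1 + α) • x + p) '' M)) =
      ⋃ μ ∈ Set.Icc (0 : ℝ) 1, (fun x => (1 + μ * α) • x + μ • p) '' M := by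
  rcases M.eq_empty_or_nonempty with rfl | hne
  · simp
  have hM' : Convex ℝ ((fun x => (1 + α) • x + p) '' M) := by
    rintro u ⟨x, hx, rfl⟩ v ⟨y, hy, rfl⟩ a b ha hb hab
    refine ⟨a • x + b • y, hMv hx hy ha hb hab, ?_⟩
    have : (1 + α) • (a • x + b • y) + (a + b) • p
        = a • ((1 + α) • x + p) + b • ((1 + α) • y + p) := by module
    simp only [hab, one_smul] at this
    exact this.symm ▸ rfl
  rw [convexHull_union hne (hne.image _), hMv.convexHull_eq, hM'.convexHull_eq]
  ext z
  simp only [mem_convexJoin, Set.mem_iUnion, Set.mem_image, Set.mem_Icc]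
  constructor
  · rintro ⟨x, hx, -, ⟨y, hy, rfl⟩, a, b, ha, hb, hab, rfl⟩
    have hmem : a • x + (b * (1 + α)) • y ∈ (a + b * (1 + α)) • M := by
      rw [hMv.add_smul ha (by positivity)]
      exact Set.add_mem_add (Set.smul_mem_smul_set hx) (Set.smul_mem_smul_set hy)
    have he : a + b * (1 + α) = 1 + b * α := by linear_combination hab
    rw [he] at hmem
    obtain ⟨w, hw, hwe⟩ := hmem
    refine ⟨b, ⟨hb, by linarith⟩, w, hw, ?_⟩
    simp only [] at hwe
    rw [show (1 + b * α) • w = a • x + (b * (1 + α)) • y from hwe]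
    module
  · rintro ⟨μ, ⟨h0, h1⟩, x, hx, rfl⟩
    exact ⟨x, hx, (1 + α) • x + p, ⟨x, hx, rfl⟩, 1 - μ, μ, by linarith, h0, by ring, by module⟩
end

section
/- Let M ⊆ R^n be a closed convex set with 0 ∈ M, let p ∈ R^n, α ≥ 0, and M′ = (1+α)M + p. Let f = μp for some μ with 1/3 ≤ μ ≤ 1, and P = conv(M ∪ M′). Then (1/4)P + (3/4)f ⊆ conv({0} ∪ M′) ⊆ P. -/
/-- Sandwiching for truncated cones (reduced to `x = 0`): with `0 ∈ M`, `M′ = (1+α)M + p`,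
`f = μp`, `1/3 ≤ μ ≤ 1` and `P = conv(M ∪ M′)`, one has
`(1/4)P + (3/4)f ⊆ conv({0} ∪ M′) ⊆ P`. -/
theorem truncated_cone_sandwich (n : ℕ) (M : Set (EuclideanSpace ℝ (Fin n)))
    (hMc : IsClosed M) (hMv : Convex ℝ M) (h0 : (0 : EuclideanSpace ℝ (Fin n)) ∈ M)
    (p : EuclideanSpace ℝ (Fin n)) (α : ℝ) (hα : 0 ≤ α)
    (μ : ℝ) (hμ₁ : 1 / 3 ≤ μ) (hμ₂ : μ ≤ 1) :
    ((fun x => (1 / 4 : ℝ) • x + (3 / 4 : ℝ) • (μ • p)) ''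
        convexHull ℝ (M ∪ ((fun x => (1 + α) • x + p) '' M)) ⊆
      convexHull ℝ ({0} ∪ ((fun x => (1 + α) • x + p) '' M))) ∧
    convexHull ℝ ({0} ∪ ((fun x => (1 + α) • x + p) '' M)) ⊆
      convexHull ℝ (M ∪ ((fun x => (1 + α) • x + p) '' M)) := by
  set M' : Set (EuclideanSpace ℝ (Fin n)) := (fun x => (1 + α) • x + p) '' M with hM'
  set Q : Set (EuclideanSpace ℝ (Fin n)) := convexHull ℝ ({0} ∪ M') with hQdef
  have hQ : Convex ℝ Q := convex_convexHull ℝ _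
  have hμ0 : (0:ℝ) < μ := lt_of_lt_of_le (by norm_num) hμ₁
  have hα1 : (1:ℝ) ≤ 1 + α := by linarith
  -- key membership: s • ((1+α) • c + p) ∈ Q for s ∈ [0,1], c ∈ M
  have memQ : ∀ s : ℝ, 0 ≤ s → s ≤ 1 → ∀ c ∈ M,
      s • ((1 + α) • c + p) ∈ Q := by
    intro s hs0 hs1 c hc
    have hw : (1 + α) • c + p ∈ Q :=
      subset_convexHull ℝ _ (Or.inr ⟨c, hc, rfl⟩)
    have h0Q : (0 : EuclideanSpace ℝ (Fin n)) ∈ Q :=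
      subset_convexHull ℝ _ (Or.inl rfl)
    have := hQ h0Q hw (by linarith : (0:ℝ) ≤ 1 - s) hs0 (by ring)
    simpa using this
  constructor
  · -- first inclusion
    have key : ∀ x ∈ M ∪ M', (1/4:ℝ) • x + (3/4:ℝ) • (μ • p) ∈ Q := by
      rintro x (hx | ⟨b, hb, rfl⟩)
      · -- x ∈ M, use s = 3μ/4, c = (1/(3μ(1+α))) • x
        have hden : (0:ℝ) < 3 * μ * (1 + α) := by positivity
        have hc : ((1 / (3 * μ * (1 + α))) : ℝ) • x ∈ M := by
          refine hMv.smul_mem_of_zero_mem h0 hx ⟨by positivity, ?_⟩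
          rw [div_le_one hden]; nlinarith
        have := memQ (3 * μ / 4) (by positivity) (by linarith) _ hc
        convert this using 1
        match_scalars <;> (field_simp; try ring)
      · -- x = (1+α) • b + p, use s = (1+3μ)/4, c = (1/(1+3μ)) • b
        have hden : (0:ℝ) < 1 + 3 * μ := by linarith
        have hc : ((1 / (1 + 3 * μ)) : ℝ) • b ∈ M := by
          refine hMv.smul_mem_of_zero_mem h0 hb ⟨by positivity, ?_⟩
          rw [div_le_one hden]; linarith
        have := memQ ((1 + 3 * μ) / 4) (by positivity) (by linarith) _ hc
        convert this using 1
        match_scalars <;> (field_simp; try ring)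
    have hS : Convex ℝ {x : EuclideanSpace ℝ (Fin n) |
        (1/4:ℝ) • x + (3/4:ℝ) • (μ • p) ∈ Q} := by
      intro x hx y hy a b ha hb hab
      simp only [Set.mem_setOf_eq] at *
      have h := hQ hx hy ha hb hab
      convert h using 1
      have hb1 : b = 1 - a := by linarith
      subst hb1
      match_scalars <;> ring
    have hpre := convexHull_min key hS
    rintro _ ⟨x, hx, rfl⟩
    exact hpre hx
  · exact convexHull_mono (Set.union_subset_union_left _ (by
      rintro x rfl; exact h0))
end

section
/- Let L′ ⊆ R^n be a bounded set, f′ ∈ int(L′), α > 1, and in R^{n+1} define the pyramid L = conv({a} ∪ F) with apex a = (f′, 1/(α−1)) and base F = (αL′ + (1−α)f′) × {−1}. Then the cross-section L ∩ (R^n × {0}) equals L′ × {0}, and the base of the homothetical copy L_α = (1/α)L + (1−1/α)f with f = (f′, 0) is F_α = L′ × {−1/α}. -/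
/-- Pyramid construction in `ℝ^{n+1}`: with apex `a = (f', 1/(α-1))` and base
`F = (αL' + (1-α)f') × {-1}`, the cross-section of `L = conv({a} ∪ F)` at height `0`
is `L' × {0}`, and the base of the homothetical copy `L_α = (1/α)L + (1-1/α)f`
(with `f = (f',0)`) is `F_α = L' × {-1/α}`. -/
theorem pyramid_cross_section (n : ℕ) (L' : Set (EuclideanSpace ℝ (Fin n)))
    (hb : Bornology.IsBounded L') (hconv : Convex ℝ L') (hcl : IsClosed L')
    (f' : EuclideanSpace ℝ (Fin n)) (hf' : f' ∈ interior L')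
    (α : ℝ) (hα : 1 < α) :
    (convexHull ℝ ({((f', 1 / (α - 1)) : EuclideanSpace ℝ (Fin n) × ℝ)} ∪
          ((fun x => (α • x + (1 - α) • f', (-1 : ℝ))) '' L')) ∩
        {p : EuclideanSpace ℝ (Fin n) × ℝ | p.2 = 0} =
      (fun x => (x, (0 : ℝ))) '' L') ∧
    ((fun p : EuclideanSpace ℝ (Fin n) × ℝ =>
          (1 / α) • p + (1 - 1 / α) • ((f', (0 : ℝ)) : EuclideanSpace ℝ (Fin n) × ℝ)) ''
        ((fun x => (α • x + (1 - α) • f', (-1 : ℝ))) '' L') =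
      (fun x => (x, -(1 / α))) '' L') := by
  have hα0 : (0 : ℝ) < α := by linarith
  have hαne : α ≠ 0 := ne_of_gt hα0
  have hα1 : α - 1 ≠ 0 := sub_ne_zero_of_ne hα.ne'
  have hα1' : (0:ℝ) < α - 1 := by linarith
  have hne : L'.Nonempty := ⟨f', interior_subset hf'⟩
  set F : Set (EuclideanSpace ℝ (Fin n) × ℝ) :=
    (fun x => (α • x + (1 - α) • f', (-1 : ℝ))) '' L' with hF
  have hFne : F.Nonempty := hne.image _
  have hFconv : Convex ℝ F := by
    rintro _ ⟨u, hu, rfl⟩ _ ⟨v, hv, rfl⟩ a b ha hb hab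
    refine ⟨a • u + b • v, hconv hu hv ha hb hab, ?_⟩
    have hb' : b = 1 - a := by linarith
    subst hb'
    simp only [Prod.smul_mk, Prod.mk_add_mk, Prod.mk.injEq]
    constructor
    · module
    · simp only [smul_eq_mul]; ring
  constructor
  · rw [(convex_singleton _).convexHull_union hFconv (Set.singleton_nonempty _) hFne]
    ext p
    constructor
    · rintro ⟨hp, hp0⟩
      rw [mem_convexJoin] at hp
      obtain ⟨q, hq, r, hr, u, v, hu, hv, huv, rfl⟩ := hp
      rw [Set.mem_singleton_iff] at hq
      subst hq
      obtain ⟨x, hx, rfl⟩ := hr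
      have h2 : u * (1 / (α - 1)) + v * (-1) = 0 := hp0
      have hv2 : v = u * (1 / (α - 1)) := by linarith
      have hu' : u = (α - 1) / α := by
        have h4 : u * (α - 1) + u = α - 1 := by
          rw [hv2] at huv
          field_simp at huv
          linarith
        field_simp
        linear_combination h4
      have hv' : v = 1 / α := by
        rw [hu'] at huv
        field_simp at huv ⊢
        linarith
      subst hu'; subst hv'
      refine ⟨x, hx, ?_⟩
      refine Prod.ext ?_ ?_
      · show x = ((α - 1) / α) • f' + (1 / α) • (α • x + (1 - α) • f')
        match_scalars <;> (field_simp; try ring)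
      · show (0 : ℝ) = (α - 1) / α * (1 / (α - 1)) + 1 / α * (-1)
        field_simp
        ring
    · rintro ⟨x, hx, rfl⟩
      refine ⟨?_, rfl⟩
      rw [mem_convexJoin]
      refine ⟨_, Set.mem_singleton _, _, ⟨x, hx, rfl⟩, (α - 1) / α, 1 / α,
        div_nonneg (by linarith) hα0.le, by positivity, by field_simp; ring, ?_⟩
      refine Prod.ext ?_ ?_
      · show ((α - 1) / α) • f' + (1 / α) • (α • x + (1 - α) • f') = x
        match_scalars <;> (field_simp; try ring)
      · show (α - 1) / α * (1 / (α - 1)) + 1 / α * (-1) = 0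
        field_simp
        ring
  · rw [← Set.image_comp]
    refine Set.image_congr fun x hx => ?_
    refine Prod.ext ?_ ?_
    · show (1 / α) • (α • x + (1 - α) • f') + (1 - 1 / α) • f' = x
      match_scalars <;> (field_simp; try ring)
    · show 1 / α * (-1) + (1 - 1 / α) * 0 = -(1 / α)
      ring
end

section
/- Let n ≥ 1, let L be a simplex in R^n with n+1 facets containing f in its interior, and suppose there are integer points z₁, ..., z_{n+1} in the relative interiors of the n+1 distinct facets of L such that every segment [zᵢ, z_j] (i ≠ j) intersects L_α = (1/α)L + (1−1/α)f for some α > 1. Then every lattice-free polyhedron B ⊆ R^n with at most n facets fails to contain L_λ = (1/λ)L + (1−1/λ)f for any λ with 1 ≤ λ < α. Equivalently, ρ_f(B, L) ≥ α for every B ∈ L_n^n. -/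
open Pointwise

/-- If `L` is a simplex with `n+1` facets, `f ∈ int L`, integer points `zᵢ` lie in the
relative interiors of the `n+1` facets, and every segment `[zᵢ, z_j]` meets
`L_α = (1/α)L + (1-1/α)f`, then no lattice-free polyhedron with at most `n` facets
contains `L_λ = (1/λ)L + (1-1/λ)f` for any `1 ≤ λ < α`; i.e. `ρ_f(B,L) ≥ α`. -/
theorem no_small_facet_polyhedron_contains (n : ℕ) (hn : 1 ≤ n)
    (a : Fin (n + 1) → EuclideanSpace ℝ (Fin n)) (b : Fin (n + 1) → ℝ)
    (ha : ∀ i, a i ≠ 0)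
    (L : Set (EuclideanSpace ℝ (Fin n)))
    (hL : L = {x | ∀ i, (inner ℝ (a i) (x) : ℝ) ≤ b i})
    (f : EuclideanSpace ℝ (Fin n)) (hf : f ∈ interior L)
    (α : ℝ) (hα : 1 < α)
    (z : Fin (n + 1) → EuclideanSpace ℝ (Fin n))
    (hzint : ∀ i t, ∃ m : ℤ, z i t = (m : ℝ))
    (hzL : ∀ i, z i ∈ L)
    (hzeq : ∀ i, (inner ℝ (a i) (z i) : ℝ) = b i)
    (hzstrict : ∀ i j, i ≠ j → (inner ℝ (a j) (z i) : ℝ) < b j)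
    (hseg : ∀ i j, i ≠ j →
      ((segment ℝ (z i) (z j)) ∩
        ((fun x => (1 / α) • x + (1 - 1 / α) • f) '' L)).Nonempty) :
    ∀ (B : Set (EuclideanSpace ℝ (Fin n))) (k : ℕ), k ≤ n →
      IsLatticeFree n B → HalfspaceRep n k B →
      ∀ l : ℝ, 1 ≤ l → l < α →
        ¬ ((fun x => (1 / l) • x + (1 - 1 / l) • f) '' L ⊆ B) := by

  intro B k hk hBfree hBrep l hl hlα hsub
  obtain ⟨hBclosed, hBconv, hBint, hBz⟩ := hBfree
  obtain ⟨c, d, hc, hB⟩ := hBrep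
  choose m hm using hzint
  have hl0 : (0:ℝ) < l := lt_of_lt_of_le one_pos hl
  have hα0 : (0:ℝ) < α := lt_trans one_pos hα
  have hLconv : Convex ℝ L := by
    rw [hL]
    intro x hx y hy u v hu hv huv i
    rw [inner_add_right, real_inner_smul_right, real_inner_smul_right]
    calc u * (inner ℝ (a i) x : ℝ) + v * inner ℝ (a i) y
        ≤ u * b i + v * b i := by
          apply add_le_add
          · exact mul_le_mul_of_nonneg_left (hx i) hu
          · exact mul_le_mul_of_nonneg_left (hy i) hv
      _ = b i := by rw [← add_mul, huv, one_mul]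
  -- each z i violates some halfspace of B
  have hzi : ∀ i, ∃ j : Fin k, d j ≤ (inner ℝ (c j) (z i) : ℝ) := by
    intro i
    by_contra h
    push_neg at h
    have hopen : IsOpen {x : EuclideanSpace ℝ (Fin n) | ∀ j, (inner ℝ (c j) x : ℝ) < d j} := by
      have heq : {x : EuclideanSpace ℝ (Fin n) | ∀ j, (inner ℝ (c j) x : ℝ) < d j}
          = ⋂ j, {x : EuclideanSpace ℝ (Fin n) | (inner ℝ (c j) x : ℝ) < d j} := by
        ext x; simp [Set.mem_iInter]
      rw [heq]
      exact isOpen_iInter_of_finite fun j =>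
        isOpen_lt (Continuous.inner continuous_const continuous_id) continuous_const
    have hsubB : {x : EuclideanSpace ℝ (Fin n) | ∀ j, (inner ℝ (c j) x : ℝ) < d j} ⊆ B := by
      rw [hB]; exact fun x hx j => (hx j).le
    have hzint : z i ∈ interior B := interior_maximal hsubB hopen h
    apply hBz (m i)
    have hze : (WithLp.toLp 2 (fun t => ((m i t : ℤ) : ℝ)) : EuclideanSpace ℝ (Fin n)) = z i := by
      ext t; exact (hm i t).symm
    rw [hze]; exact hzint
  choose g hg using hzi
  have hcard : Fintype.card (Fin k) < Fintype.card (Fin (n+1)) := by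
    simpa using Nat.lt_succ_of_le hk
  obtain ⟨i, i', hne, hgij⟩ := Fintype.exists_ne_map_eq_of_card_lt g hcard
  obtain ⟨p, hpseg, hpL⟩ := hseg i i' hne
  obtain ⟨u, v, hu, hv, huv, hp⟩ := hpseg
  -- p violates halfspace j := g i
  have h1 := hg i
  have h2 := hg i'
  rw [← hgij] at h2
  have hpd : d (g i) ≤ (inner ℝ (c (g i)) p : ℝ) := by
    have hip : (inner ℝ (c (g i)) p : ℝ)
        = u * inner ℝ (c (g i)) (z i) + v * inner ℝ (c (g i)) (z i') := by
      rw [← hp, inner_add_right, real_inner_smul_right, real_inner_smul_right]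
    rw [hip]
    calc d (g i) = u * d (g i) + v * d (g i) := by rw [← add_mul, huv, one_mul]
      _ ≤ u * inner ℝ (c (g i)) (z i) + v * inner ℝ (c (g i)) (z i') :=
        add_le_add (mul_le_mul_of_nonneg_left h1 hu) (mul_le_mul_of_nonneg_left h2 hv)
  -- but p is in the interior of B
  obtain ⟨x, hxL, hpx⟩ := hpL
  have hy : ((1 - l/α) • f + (l/α) • x : EuclideanSpace ℝ (Fin n)) ∈ interior L :=
    hLconv.combo_interior_self_mem_interior hf hxL
      (by rw [sub_pos]; exact (div_lt_one hα0).mpr hlα)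
      (by positivity) (by ring)
  have hT : IsOpenMap (fun x : EuclideanSpace ℝ (Fin n) => (1/l) • x + (1 - 1/l) • f) := by
    have h1 : IsOpenMap (fun x : EuclideanSpace ℝ (Fin n) => (1/l) • x) :=
      isOpenMap_smul₀ (by positivity)
    have h2 : IsOpenMap (fun x : EuclideanSpace ℝ (Fin n) => x + (1 - 1/l) • f) :=
      (Homeomorph.addRight _).isOpenMap
    exact h2.comp h1
  have hpmem : p ∈ (fun x : EuclideanSpace ℝ (Fin n) => (1/l) • x + (1 - 1/l) • f) '' interior L := by
    refine ⟨(1 - l/α) • f + (l/α) • x, hy, ?_⟩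
    rw [← hpx]
    have hlne : l ≠ 0 := ne_of_gt hl0
    have hαne : α ≠ 0 := ne_of_gt hα0
    show (1/l) • ((1 - l/α) • f + (l/α) • x) + (1 - 1/l) • f
        = (1/α) • x + (1 - 1/α) • f
    rw [smul_add, smul_smul, smul_smul, add_comm ((1/l * (1 - l/α)) • f), add_assoc,
      ← add_smul]
    congr 1
    · congr 1; field_simp
    · congr 1; field_simp; ring
  have hpint : p ∈ interior B :=
    interior_mono hsub (hT.image_interior_subset L hpmem)
  -- contradiction: push p slightly in direction c (g i)
  obtain ⟨ε, hε, hball⟩ := Metric.isOpen_iff.mp isOpen_interior p hpint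
  set cg := c (g i)
  have hcg : cg ≠ 0 := hc (g i)
  have hcgn : (0:ℝ) < ‖cg‖ := norm_pos_iff.mpr hcg
  set t : ℝ := ε / (2 * ‖cg‖)
  have ht : 0 < t := by positivity
  have hq : p + t • cg ∈ interior B := by
    apply hball
    rw [Metric.mem_ball, dist_eq_norm]
    have : p + t • cg - p = t • cg := by abel
    rw [this, norm_smul, Real.norm_eq_abs, abs_of_pos ht]
    have htε : t * ‖cg‖ = ε / 2 := by
      show ε / (2 * ‖cg‖) * ‖cg‖ = ε / 2
      field_simp
    rw [htε]
    linarith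
  have hqB : p + t • cg ∈ B := interior_subset hq
  rw [hB] at hqB
  have := hqB (g i)
  have hiq : (inner ℝ cg (p + t • cg) : ℝ) = inner ℝ cg p + t * ‖cg‖^2 := by
    rw [inner_add_right, real_inner_smul_right, real_inner_self_eq_norm_sq]
  rw [hiq] at this
  have hpos : 0 < t * ‖cg‖^2 := by positivity
  linarith
end
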